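/- arXiv:2601.12339 — 3 statements merged into one kernel-verified Lean document; each statement's English description precedes it below -/
import Mathlib

section
/- (Negative Pecuniary Externality, Proposition 1.) Let the shadow price of firm i's capital be q_i = Θ · θ · s_i (1 - s_i) / K_i, where Θ > 0 is a constant and s_i is the logit market share. If s_i < 1/2, then for every rival j ≠ i the partial derivative of q_i with respect to K_j (all other arguments fixed) is strictly negative: ∂q_i/∂K_j = Θ (θ²/K_i) (1 - 2 s_i) · (-s_i s_j / K_j) < 0. That is, an increase in a competitor's digital intelligence capital strictly reduces the shadow value of firm i's capital stock. -/
open Real Finset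

/-- Logit market share of firm `i` with capabilities `K`, prices `p`, and
intelligence elasticity `θ`. -/
noncomputable def logitShare {N : ℕ} (θ : ℝ) (K p : Fin N → ℝ) (i : Fin N) : ℝ :=
  K i ^ θ * Real.exp (-(p i)) / ∑ k, K k ^ θ * Real.exp (-(p k))

/-- Negative Pecuniary Externality (Proposition 1): with shadow price
`q_i = Θ · θ · s_i (1 - s_i) / K_i`, if `s_i < 1/2`, then for every rival `j ≠ i`,
`∂q_i/∂K_j = Θ (θ²/K_i) (1 - 2 s_i) · (-s_i s_j / K_j) < 0`. -/
theorem stmt_3 {N : ℕ} (hN : 2 ≤ N) (θ : ℝ) (hθ : 0 < θ) (Θ : ℝ) (hΘ : 0 < Θ)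
    (K p : Fin N → ℝ) (hK : ∀ k, 0 < K k) (i j : Fin N) (hij : j ≠ i)
    (hs : logitShare θ K p i < 1 / 2) :
    HasDerivAt
      (fun x => Θ * θ * (logitShare θ (Function.update K j x) p i *
        (1 - logitShare θ (Function.update K j x) p i)) / K i)
      (Θ * (θ ^ 2 / K i) * (1 - 2 * logitShare θ K p i) *
        (-(logitShare θ K p i * logitShare θ K p j) / K j)) (K j) ∧
    Θ * (θ ^ 2 / K i) * (1 - 2 * logitShare θ K p i) *
        (-(logitShare θ K p i * logitShare θ K p j) / K j) < 0 := by
  set A : ℝ := K i ^ θ * Real.exp (-(p i)) with hA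
  set E : ℝ := Real.exp (-(p j)) with hE
  set C : ℝ := ∑ k ∈ {j}ᶜ, K k ^ θ * Real.exp (-(p k)) with hC
  set S : ℝ := ∑ k, K k ^ θ * Real.exp (-(p k)) with hSdef
  have hA0 : 0 < A := mul_pos (Real.rpow_pos_of_pos (hK i) θ) (Real.exp_pos _)
  have hE0 : 0 < E := Real.exp_pos _
  have hS0 : 0 < S := Finset.sum_pos (fun k _ =>
    mul_pos (Real.rpow_pos_of_pos (hK k) θ) (Real.exp_pos _)) ⟨j, Finset.mem_univ j⟩
  -- split sum
  have hsplit : ∀ x : ℝ, (∑ k, (Function.update K j x k) ^ θ * Real.exp (-(p k)))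
      = C + x ^ θ * E := by
    intro x
    rw [Fintype.sum_eq_add_sum_compl j]
    have : ∀ k ∈ ({j}ᶜ : Finset (Fin N)),
        (Function.update K j x k) ^ θ * Real.exp (-(p k)) = K k ^ θ * Real.exp (-(p k)) := by
      intro k hk
      rw [Function.update_of_ne (by simpa using hk)]
    rw [Finset.sum_congr rfl this, Function.update_self]
    ring
  have hSsplit : S = C + K j ^ θ * E := by
    rw [hSdef, Fintype.sum_eq_add_sum_compl j]; ring
  have hshare : ∀ x : ℝ, logitShare θ (Function.update K j x) p i = A / (C + x ^ θ * E) := by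
    intro x
    unfold logitShare
    rw [hsplit x, Function.update_of_ne hij.symm]
  have hsi : logitShare θ K p i = A / S := rfl
  have hsj : logitShare θ K p j = K j ^ θ * E / S := rfl
  have hsi0 : 0 < logitShare θ K p i := by rw [hsi]; positivity
  have hsj0 : 0 < logitShare θ K p j := by
    rw [hsj]; exact div_pos (mul_pos (Real.rpow_pos_of_pos (hK j) θ) hE0) hS0
  -- derivative of denominator
  have hD : HasDerivAt (fun x : ℝ => C + x ^ θ * E) (θ * K j ^ (θ - 1) * E) (K j) := by
    exact (((Real.hasDerivAt_rpow_const (Or.inl (hK j).ne')).mul_const E).const_add C)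
  have hDval : C + K j ^ θ * E = S := hSsplit.symm
  have hf : HasDerivAt (fun x : ℝ => A / (C + x ^ θ * E))
      (-(A * (θ * K j ^ (θ - 1) * E)) / S ^ 2) (K j) := by
    have := (hasDerivAt_const (K j) A).div hD (by rw [hDval]; exact hS0.ne')
    simpa [hDval, Pi.div_def] using this
  have hq : HasDerivAt
      (fun x => Θ * θ * (logitShare θ (Function.update K j x) p i *
        (1 - logitShare θ (Function.update K j x) p i)) / K i)
      (Θ * θ * ((-(A * (θ * K j ^ (θ - 1) * E)) / S ^ 2) * (1 - A / S)
        + (A / S) * (0 - (-(A * (θ * K j ^ (θ - 1) * E)) / S ^ 2))) / K i) (K j) := by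
    simp only [hshare]
    have h1 : HasDerivAt (fun x : ℝ => (1 : ℝ) - A / (C + x ^ θ * E))
        (0 - (-(A * (θ * K j ^ (θ - 1) * E)) / S ^ 2)) (K j) := (hasDerivAt_const _ 1).sub hf
    have := ((hf.mul h1).const_mul (Θ * θ)).div_const (K i)
    simpa [hDval, mul_comm] using this
  constructor
  · convert hq using 1
    rw [hsi, hsj]
    rw [Real.rpow_sub_one (hK j).ne']
    field_simp
    ring
  · have key : 0 < Θ * (θ ^ 2 / K i) * (1 - 2 * logitShare θ K p i) *
        ((logitShare θ K p i * logitShare θ K p j) / K j) := by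
      apply mul_pos (mul_pos (mul_pos hΘ (div_pos (pow_pos hθ 2) (hK i))) (by linarith))
        (div_pos (mul_pos hsi0 hsj0) (hK j))
    have heq : Θ * (θ ^ 2 / K i) * (1 - 2 * logitShare θ K p i) *
        (-(logitShare θ K p i * logitShare θ K p j) / K j)
        = -(Θ * (θ ^ 2 / K i) * (1 - 2 * logitShare θ K p i) *
        ((logitShare θ K p i * logitShare θ K p j) / K j)) := by ring
    rw [heq]
    linarith
end

section
/- (Capacity-constrained pricing rule.) Fix capabilities K_1,...,K_N > 0, rivals' prices p_{-i}, aggregate token demand Q_total > 0, and parameters c_0 ≥ 0, κ > 0, Q̄ > 0. Let s_i(p) denote firm i's logit share as a function of its own price p, and let π(p) = p · s_i(p) Q_total − C_ops(s_i(p) Q_total), where C_ops(Q) = c_0 Q − κ Q̄ log(1 − Q/Q̄). Then at any price p with Q_i := s_i(p) Q_total ∈ (0, Q̄), the first-order condition π'(p) = 0 holds if and only if p = c_0 + κ/(1 − Q_i/Q̄) + 1/(1 − s_i(p)), i.e. the optimal price decomposes into base cost, congestion premium, and oligopoly markup. -/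
open Real Finset

/-- Operational cost of serving `Q` tokens against physical capacity `Qbar`. -/
noncomputable def Cops (c0 κ Qbar Q : ℝ) : ℝ :=
  c0 * Q - κ * Qbar * Real.log (1 - Q / Qbar)

/-- Capacity-constrained pricing rule: at any own price `pr` at which firm `i`'s
token demand `Q_i = s_i(pr) Q_total` lies in `(0, Q̄)`, the first-order condition
`π'(pr) = 0` holds iff `pr = c_0 + κ/(1 - Q_i/Q̄) + 1/(1 - s_i(pr))`. -/
theorem stmt_4 {N : ℕ} (hN : 2 ≤ N) (θ : ℝ) (hθ : 0 < θ)
    (K p : Fin N → ℝ) (hK : ∀ k, 0 < K k) (i : Fin N)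
    (Qtotal c0 κ Qbar : ℝ) (hQt : 0 < Qtotal) (hc0 : 0 ≤ c0) (hκ : 0 < κ) (hQbar : 0 < Qbar)
    (s profit : ℝ → ℝ)
    (hsdef : s = fun y => logitShare θ K (Function.update p i y) i)
    (hprofit : profit = fun y => y * s y * Qtotal - Cops c0 κ Qbar (s y * Qtotal))
    (pr : ℝ) (hQpos : 0 < s pr * Qtotal) (hQlt : s pr * Qtotal < Qbar) :
    deriv profit pr = 0 ↔
      pr = c0 + κ / (1 - s pr * Qtotal / Qbar) + 1 / (1 - s pr) := by
  -- abbreviations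
  set A : ℝ := K i ^ θ with hA
  set B : ℝ := ∑ k ∈ Finset.univ.erase i, K k ^ θ * Real.exp (-(p k)) with hB
  have hApos : 0 < A := Real.rpow_pos_of_pos (hK i) θ
  have hBpos : 0 < B := by
    apply Finset.sum_pos
    · intro k _
      exact mul_pos (Real.rpow_pos_of_pos (hK k) θ) (Real.exp_pos _)
    · rw [← Finset.card_pos, Finset.card_erase_of_mem (Finset.mem_univ i), Finset.card_univ,
        Fintype.card_fin]
      omega
  -- closed form for s
  have hs : ∀ y, s y = A * Real.exp (-y) / (A * Real.exp (-y) + B) := by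
    intro y
    rw [hsdef]
    simp only [logitShare, Function.update_self]
    congr 1
    rw [← Finset.add_sum_erase _ _ (Finset.mem_univ i), Function.update_self]
    congr 1
    apply Finset.sum_congr rfl
    intro k hk
    rw [Function.update_of_ne (Finset.ne_of_mem_erase hk)]
  have hDpos : ∀ y, 0 < A * Real.exp (-y) + B := fun y =>
    add_pos (mul_pos hApos (Real.exp_pos _)) hBpos
  have hspos : ∀ y, 0 < s y := by
    intro y; rw [hs y]
    exact div_pos (mul_pos hApos (Real.exp_pos _)) (hDpos y)
  have hslt : ∀ y, s y < 1 := by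
    intro y; rw [hs y, div_lt_one (hDpos y)]
    linarith [mul_pos hApos (Real.exp_pos (-y))]
  -- derivative of s
  have hsderiv : HasDerivAt s (-(s pr) * (1 - s pr)) pr := by
    have hnum : HasDerivAt (fun y : ℝ => A * Real.exp (-y)) (-(A * Real.exp (-pr))) pr := by
      have := (Real.hasDerivAt_exp (-pr)).comp pr ((hasDerivAt_id pr).neg)
      simpa using (this.const_mul A)
    have hden : HasDerivAt (fun y : ℝ => A * Real.exp (-y) + B) (-(A * Real.exp (-pr))) pr :=
      hnum.add_const B
    have hd := hnum.fun_div hden (ne_of_gt (hDpos pr))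
    have heq : (fun y : ℝ => A * Real.exp (-y) / (A * Real.exp (-y) + B)) = s := by
      funext y; rw [hs y]
    rw [heq] at hd
    refine hd.congr_deriv ?_
    rw [hs pr]
    have hD := hDpos pr
    field_simp
    ring
  set D : ℝ := 1 - s pr * Qtotal / Qbar with hD
  have hDpos' : 0 < D := by
    rw [hD]
    have : s pr * Qtotal / Qbar < 1 := (div_lt_one hQbar).2 hQlt
    linarith
  set s' : ℝ := -(s pr) * (1 - s pr) with hs'
  -- derivative of profit
  have hprofderiv : HasDerivAt profit
      ((s pr + pr * s') * Qtotal - (c0 * (s' * Qtotal) - κ * Qbar * ((-(s' * Qtotal / Qbar)) / D))) pr := by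
    rw [hprofit]
    have h1 : HasDerivAt (fun y => y * s y * Qtotal) ((s pr + pr * s') * Qtotal) pr := by
      have := ((hasDerivAt_id pr).mul hsderiv).mul_const Qtotal
      refine this.congr_deriv ?_; simp only [id_eq]; rw [hs']; ring
    have h2 : HasDerivAt (fun y => 1 - s y * Qtotal / Qbar) (-(s' * Qtotal / Qbar)) pr := by
      have := ((hsderiv.mul_const Qtotal).div_const Qbar).const_sub 1
      simpa using this
    have h3 : HasDerivAt (fun y => Real.log (1 - s y * Qtotal / Qbar))
        ((-(s' * Qtotal / Qbar)) / D) pr := h2.log (ne_of_gt hDpos')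
    have h4 : HasDerivAt (fun y => Cops c0 κ Qbar (s y * Qtotal))
        (c0 * (s' * Qtotal) - κ * Qbar * ((-(s' * Qtotal / Qbar)) / D)) pr := by
      simp only [Cops]
      exact (((hsderiv.mul_const Qtotal).const_mul c0).sub ((h3.const_mul (κ * Qbar))))
    exact h1.sub h4
  rw [hprofderiv.deriv]
  -- algebra
  have hQbar' : Qbar ≠ 0 := ne_of_gt hQbar
  have hspr : 0 < s pr := hspos pr
  have hslt' : s pr < 1 := hslt pr
  have h1s : (0:ℝ) < 1 - s pr := by linarith
  have hval : (s pr + pr * s') * Qtotal - (c0 * (s' * Qtotal) - κ * Qbar * ((-(s' * Qtotal / Qbar)) / D))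
      = s pr * Qtotal * (1 - (1 - s pr) * (pr - c0 - κ / D)) := by
    rw [hs']
    field_simp
    ring
  rw [hval]
  set σ : ℝ := s pr with hσ
  have hsQ : σ * Qtotal ≠ 0 := ne_of_gt hQpos
  constructor
  · intro h
    have h3 : (1 - σ) * (pr - c0 - κ / D) = 1 := by
      rcases mul_eq_zero.1 h with h' | h'
      · exact absurd h' hsQ
      · linarith
    have h4 : pr - c0 - κ / D = 1 / (1 - σ) := by
      rw [eq_div_iff (ne_of_gt h1s)]
      linear_combination h3
    linarith
  · intro h
    have h3 : (1 - σ) * (pr - c0 - κ / D) = 1 := by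
      rw [h]
      field_simp
      ring
    linear_combination (-(σ * Qtotal)) * h3
end

section
/- (Frontier-pressure component of Red Queen depreciation.) Suppose N ≥ 2 firms charge equal prices, firm i's capability is constant K_i(t) = K > 0, and every rival's capability grows along the frontier, K_j(t) = K e^{g_A t} for j ≠ i, with θ > 0 and g_A > 0. Then firm i's logit market share equals s_i(t) = 1/(1 + (N−1) e^{θ g_A t}); its logarithmic derivative satisfies d/dt [log s_i(t)] = −θ g_A (1 − s_i(t)), which at t = 0 equals −θ g_A (1 − 1/N); and s_i(t) → 0 as t → ∞. -/
open Real Filter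

/-- Frontier-pressure component of Red Queen depreciation: with equal prices,
firm `i`'s capability constant at `Kv` and every rival growing as `Kv e^{g_A t}`,
the logit share is `s_i(t) = 1/(1 + (N-1) e^{θ g_A t})`, its log-derivative is
`-θ g_A (1 - s_i(t))` (equal to `-θ g_A (1 - 1/N)` at `t = 0`), and `s_i(t) → 0`. -/
theorem stmt_7 (N : ℕ) (hN : 2 ≤ N) (θ gA Kv : ℝ) (hθ : 0 < θ) (hgA : 0 < gA)
    (hKv : 0 < Kv) (s : ℝ → ℝ)
    (hs : s = fun t =>
      Kv ^ θ / (Kv ^ θ + ((N : ℝ) - 1) * (Kv * Real.exp (gA * t)) ^ θ)) :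
    (∀ t, s t = 1 / (1 + ((N : ℝ) - 1) * Real.exp (θ * gA * t))) ∧
    (∀ t, HasDerivAt (fun u => Real.log (s u)) (-(θ * gA) * (1 - s t)) t) ∧
    (-(θ * gA) * (1 - s 0) = -(θ * gA) * (1 - 1 / (N : ℝ))) ∧
    Filter.Tendsto s Filter.atTop (nhds 0) := by
  have hc0 : (0:ℝ) < (N:ℝ) - 1 := by
    have : (2:ℝ) ≤ N := by exact_mod_cast hN
    linarith
  set c : ℝ := (N:ℝ) - 1 with hcdef
  have hK : (0:ℝ) < Kv ^ θ := Real.rpow_pos_of_pos hKv θ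
  have hFpos : ∀ t : ℝ, (0:ℝ) < 1 + c * Real.exp (θ * gA * t) := by
    intro t
    have := Real.exp_pos (θ * gA * t)
    nlinarith
  have hkey : ∀ t, s t = 1 / (1 + c * Real.exp (θ * gA * t)) := by
    intro t
    rw [hs]
    simp only
    have h1 : (Kv * Real.exp (gA * t)) ^ θ = Kv ^ θ * Real.exp (θ * gA * t) := by
      rw [Real.mul_rpow hKv.le (Real.exp_pos _).le, ← Real.exp_mul]
      congr 2
      ring
    have hd : 0 < Kv ^ θ + c * (Kv ^ θ * Real.exp (θ * gA * t)) := by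
      have := mul_pos hc0 (mul_pos hK (Real.exp_pos (θ * gA * t)))
      linarith
    rw [h1, div_eq_div_iff hd.ne' (hFpos t).ne']
    ring
  refine ⟨hkey, ?_, ?_, ?_⟩
  · intro t
    have hF : HasDerivAt (fun u : ℝ => 1 + c * Real.exp (θ * gA * u))
        (c * (Real.exp (θ * gA * t) * (θ * gA))) t := by
      have he : HasDerivAt (fun u : ℝ => Real.exp (θ * gA * u))
          (Real.exp (θ * gA * t) * (θ * gA)) t := by
        have := (Real.hasDerivAt_exp (θ * gA * t)).comp t
          ((hasDerivAt_id t).const_mul (θ * gA))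
        simpa [Function.comp_def] using this
      simpa using (he.const_mul c).const_add 1
    have hlog : HasDerivAt (fun u : ℝ => -Real.log (1 + c * Real.exp (θ * gA * u)))
        (-(c * (Real.exp (θ * gA * t) * (θ * gA)) / (1 + c * Real.exp (θ * gA * t)))) t :=
      (hF.log (hFpos t).ne').neg
    have heq : (fun u : ℝ => Real.log (s u)) =
        fun u : ℝ => -Real.log (1 + c * Real.exp (θ * gA * u)) := by
      funext u
      rw [hkey u, one_div, Real.log_inv]
    rw [heq]
    convert hlog using 1
    rw [hkey t]
    field_simp
    ring
  · rw [hkey 0]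
    simp only [mul_zero, Real.exp_zero, mul_one, hcdef]
    have hN0 : (N:ℝ) ≠ 0 := by positivity
    rw [add_sub_cancel]
  · have hFtop : Tendsto (fun t : ℝ => 1 + c * Real.exp (θ * gA * t)) atTop atTop := by
      apply Filter.tendsto_atTop_add_const_left
      apply Filter.Tendsto.const_mul_atTop hc0
      exact Real.tendsto_exp_atTop.comp (tendsto_id.const_mul_atTop (by positivity))
    have : Tendsto (fun t : ℝ => 1 / (1 + c * Real.exp (θ * gA * t))) atTop (nhds 0) := by
      simpa [one_div, Pi.inv_def] using hFtop.inv_tendsto_atTop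
    exact this.congr fun t => (hkey t).symm
end
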